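/- For each integer k ≥ 1, let α(k) be the infimum over all α such that every election admits an α-undominated committee of size k. Then for all integers 1 ≤ k' < k, α(k) ≤ (k'/k)²·α(k') + 4·ln(k/k')/(k - k'). -/

import Mathlib

open Finset
open scoped Classical

/-- `hasUndom k α` says that every election (finitely many voters, each with a strict
linear order over a finite candidate set) admits a committee of size (at most) `k` that is
`α`-undominated: every candidate is preferred over all of the committee by strictly fewer
than an `α` fraction of the voters. -/
def hasUndom (k : ℕ) (α : ℝ) : Prop :=
  ∀ (n m : ℕ) (pref : Fin n → Fin m → Fin m → Prop),
    (∀ v, IsStrictTotalOrder (Fin m) (pref v)) → 0 < n →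
    ∃ S : Finset (Fin m), S.card ≤ k ∧
      ∀ a : Fin m,
        ((Finset.univ.filter fun v => ∀ b ∈ S, pref v a b).card : ℝ) / (n : ℝ) < α

/-- In a finite nonempty set, a strict total order has a top element. -/
lemma stmt19_exists_top {m : ℕ} (r : Fin m → Fin m → Prop)
    (htr : ∀ a b c, r a b → r b c → r a c)
    (htri : ∀ a b, a ≠ b → r a b ∨ r b a)
    (s : Finset (Fin m)) (hs : s.Nonempty) :
    ∃ a ∈ s, ∀ b ∈ s, b ≠ a → r a b := by
  classical
  induction s using Finset.induction_on with
  | empty => simp at hs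
  | @insert a s' ha ih =>
    rcases s'.eq_empty_or_nonempty with rfl | hne
    · refine ⟨a, mem_insert_self _ _, ?_⟩
      intro b hb hba
      rcases mem_insert.mp hb with rfl | hb'
      · exact absurd rfl hba
      · simp at hb'
    · obtain ⟨c, hc, hctop⟩ := ih hne
      have hac : a ≠ c := fun h => ha (h ▸ hc)
      rcases htri a c hac with h1 | h1
      · refine ⟨a, mem_insert_self _ _, ?_⟩
        intro b hb hba
        rcases mem_insert.mp hb with rfl | hb'
        · exact absurd rfl hba
        · by_cases hbc : b = c
          · subst hbc; exact h1
          · exact htr _ _ _ h1 (hctop b hb' hbc)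
      · refine ⟨c, mem_insert_of_mem hc, ?_⟩
        intro b hb hbc
        rcases mem_insert.mp hb with rfl | hb'
        · exact h1
        · exact hctop b hb' hbc

/-- The discrete "Riemann sum" bound: for nonnegative weights `l` and a strict total
order `r`, summing `l a * max 0 (c - (mass of {b ⪰ a} within s))` is at most `c²/2`. -/
lemma stmt19_riemann {m : ℕ} (r : Fin m → Fin m → Prop)
    (htr : ∀ a b c, r a b → r b c → r a c)
    (htri : ∀ a b, a ≠ b → r a b ∨ r b a)
    (hirr : ∀ a, ¬ r a a)
    (l : Fin m → ℝ) (hl : ∀ b, 0 ≤ l b) (s : Finset (Fin m)) :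
    ∀ c : ℝ, 0 ≤ c →
      ∑ a ∈ s, l a * max 0 (c - ∑ b ∈ s.filter (fun b => b = a ∨ r b a), l b) ≤ c^2/2 := by
  classical
  induction s using Finset.strongInduction with
  | _ s ih =>
    intro c hc
    rcases s.eq_empty_or_nonempty with rfl | hne
    · simp; positivity
    obtain ⟨a0, ha0, htop⟩ := stmt19_exists_top r htr htri s hne
    have hasym : ∀ a b, r a b → ¬ r b a := fun a b hab hba => hirr a (htr a b a hab hba)
    have hfa0 : s.filter (fun b => b = a0 ∨ r b a0) = {a0} := by
      ext b
      simp only [Finset.mem_filter, Finset.mem_singleton]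
      constructor
      · rintro ⟨hbs, rfl | hb⟩
        · rfl
        · by_contra hne'
          exact hasym b a0 hb (htop b hbs hne')
      · rintro rfl; exact ⟨ha0, Or.inl rfl⟩
    have hterm : ∀ a ∈ s.erase a0,
        s.filter (fun b => b = a ∨ r b a)
          = insert a0 ((s.erase a0).filter (fun b => b = a ∨ r b a)) := by
      intro a ha
      have haa0 : a ≠ a0 := (Finset.mem_erase.mp ha).1
      have has : a ∈ s := (Finset.mem_erase.mp ha).2
      ext b
      simp only [Finset.mem_filter, Finset.mem_insert, Finset.mem_erase]
      constructor
      · rintro ⟨hbs, hb⟩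
        by_cases hba0 : b = a0
        · exact Or.inl hba0
        · exact Or.inr ⟨⟨hba0, hbs⟩, hb⟩
      · rintro (rfl | ⟨⟨hba0, hbs⟩, hb⟩)
        · exact ⟨ha0, Or.inr (htop a has haa0)⟩
        · exact ⟨hbs, hb⟩
    set c' := max 0 (c - l a0) with hc'
    have hstep : ∑ a ∈ s.erase a0,
        l a * max 0 (c - ∑ b ∈ s.filter (fun b => b = a ∨ r b a), l b)
        ≤ ∑ a ∈ s.erase a0,
          l a * max 0 (c' - ∑ b ∈ (s.erase a0).filter (fun b => b = a ∨ r b a), l b) := by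
      apply Finset.sum_le_sum
      intro a ha
      apply mul_le_mul_of_nonneg_left _ (hl a)
      have ha0notin : a0 ∉ (s.erase a0).filter (fun b => b = a ∨ r b a) :=
        fun h => (Finset.mem_erase.mp (Finset.mem_filter.mp h).1).1 rfl
      rw [hterm a ha, Finset.sum_insert ha0notin]
      apply max_le_max le_rfl
      have h1 : c - l a0 ≤ c' := le_max_right _ _
      linarith
    have hih := ih (s.erase a0) (Finset.erase_ssubset ha0) c' (le_max_left _ _)
    have hsum := Finset.add_sum_erase s
      (fun a => l a * max 0 (c - ∑ b ∈ s.filter (fun b => b = a ∨ r b a), l b)) ha0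
    rw [← hsum]
    beta_reduce
    have hsingle : ∑ b ∈ s.filter (fun b => b = a0 ∨ r b a0), l b = l a0 := by
      rw [hfa0, Finset.sum_singleton]
    rw [hsingle]
    have hmain : l a0 * max 0 (c - l a0) + c'^2/2 ≤ c^2/2 := by
      rcases le_or_gt c (l a0) with h | h
      · have h1 : max 0 (c - l a0) = 0 := max_eq_left (by linarith)
        have h2 : c' = 0 := max_eq_left (by linarith)
        rw [h1, h2]
        norm_num
        positivity
      · have h1 : max 0 (c - l a0) = c - l a0 := max_eq_right (by linarith)
        have h2 : c' = c - l a0 := max_eq_right (by linarith)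
        rw [h1, h2]
        nlinarith [hl a0]
    have := le_trans hstep hih
    linarith

/-- Derandomized iid sampling: there is a multiset `T` of size `K` such that the number of
voters none of whose "good set" `A v` is hit by `T` is at most `∑ (1 - mass (A v))^K`. -/
lemma stmt19_sample {n m : ℕ} (l : Fin m → ℝ) (hl0 : ∀ b, 0 ≤ l b) (hl1 : ∑ b, l b = 1)
    (A : Fin n → Finset (Fin m)) :
    ∀ (K : ℕ) (W : Finset (Fin n)), ∃ T : Multiset (Fin m), Multiset.card T = K ∧
      ((W.filter fun v => ∀ b ∈ T, b ∉ A v).card : ℝ)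
        ≤ ∑ v ∈ W, (1 - ∑ b ∈ A v, l b)^K := by
  classical
  intro K
  induction K with
  | zero =>
    intro W
    refine ⟨0, rfl, ?_⟩
    simp
  | succ K ih =>
    intro W
    set x : Fin n → ℝ := fun v => 1 - ∑ c ∈ A v, l c with hx
    set g : Fin m → ℝ := fun b => ∑ v ∈ W.filter (fun v => b ∉ A v), x v ^ K with hg
    have hkey : ∑ b : Fin m, l b * g b = ∑ v ∈ W, x v ^ (K+1) := by
      have h1 : ∀ b, l b * g b = ∑ v ∈ W, (if b ∉ A v then l b * x v ^ K else 0) := by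
        intro b
        rw [hg, Finset.mul_sum, Finset.sum_filter]
      rw [Finset.sum_congr rfl (fun b _ => h1 b), Finset.sum_comm]
      apply Finset.sum_congr rfl
      intro v hv
      have h2 : ∑ b : Fin m, (if b ∉ A v then l b * x v ^ K else 0)
          = (∑ b ∈ univ.filter (fun b => b ∉ A v), l b) * x v ^ K := by
        rw [Finset.sum_mul, Finset.sum_filter]
      have h3 : ∑ b ∈ univ.filter (fun b => b ∈ A v), l b = ∑ c ∈ A v, l c := by
        apply Finset.sum_congr _ (fun _ _ => rfl)
        ext b; simp
      have h5 := Finset.sum_filter_add_sum_filter_not univ (fun b => b ∈ A v) l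
      rw [h3, hl1] at h5
      rw [h2]
      have h6 : ∑ b ∈ univ.filter (fun b => b ∉ A v), l b = x v := by
        simp only [hx]; linarith
      rw [h6, pow_succ, mul_comm]
    have hex : ∃ b0 : Fin m, g b0 ≤ ∑ v ∈ W, x v ^ (K+1) := by
      by_contra hno
      push_neg at hno
      have hbpos : ∃ b, 0 < l b := by
        by_contra hall
        push_neg at hall
        have : ∑ b, l b ≤ 0 := Finset.sum_nonpos (fun b _ => hall b)
        rw [hl1] at this; linarith
      obtain ⟨bp, hbp⟩ := hbpos
      set S := ∑ v ∈ W, x v ^ (K+1) with hS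
      have hlt : ∑ b : Fin m, l b * S < ∑ b : Fin m, l b * g b := by
        apply Finset.sum_lt_sum
        · intro b _
          exact mul_le_mul_of_nonneg_left (hno b).le (hl0 b)
        · exact ⟨bp, Finset.mem_univ _, mul_lt_mul_of_pos_left (hno bp) hbp⟩
      rw [hkey] at hlt
      rw [← Finset.sum_mul, hl1, one_mul] at hlt
      exact lt_irrefl _ hlt
    obtain ⟨b0, hb0⟩ := hex
    obtain ⟨T', hT'card, hT'⟩ := ih (W.filter (fun v => b0 ∉ A v))
    refine ⟨b0 ::ₘ T', by simp [hT'card], ?_⟩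
    have hset : (W.filter fun v => ∀ b ∈ (b0 ::ₘ T'), b ∉ A v)
        = ((W.filter fun v => b0 ∉ A v).filter fun v => ∀ b ∈ T', b ∉ A v) := by
      rw [Finset.filter_filter]
      ext v
      simp only [Finset.mem_filter, Multiset.mem_cons]
      constructor
      · rintro ⟨hvW, h⟩
        exact ⟨hvW, h b0 (Or.inl rfl), fun b hb => h b (Or.inr hb)⟩
      · rintro ⟨hvW, h1, h2⟩
        exact ⟨hvW, fun b hb => hb.elim (fun e => e ▸ h1) (h2 b)⟩
    rw [hset]
    exact le_trans hT' hb0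

/-- Any `hasUndom` bound is positive. -/
lemma stmt19_pos {j : ℕ} {α : ℝ} (h : hasUndom j α) : 0 < α := by
  classical
  have hsto : IsStrictTotalOrder (Fin 1) (fun _ _ : Fin 1 => False) :=
    { trichotomous := fun a b _ _ => Subsingleton.elim a b,
      irrefl := fun _ h => h,
      trans := fun _ _ _ h => h.elim }
  obtain ⟨S, -, hS⟩ := h 1 1 (fun _ _ _ => False) (fun _ => hsto) one_pos
  refine lt_of_le_of_lt ?_ (hS 0)
  positivity

/-- `hasUndom j 2` always holds (the empty committee works for the trivial bound). -/
lemma stmt19_two (j : ℕ) : hasUndom j 2 := by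
  classical
  intro n m pref _ hn
  refine ⟨∅, by simp, fun a => ?_⟩
  have : (Finset.univ.filter fun v : Fin n => ∀ b ∈ (∅ : Finset (Fin m)), pref v a b) = univ := by
    ext v; simp
  rw [this]
  have hn' : (0:ℝ) < n := by exact_mod_cast hn
  rw [Finset.card_univ, Fintype.card_fin, div_self hn'.ne']
  norm_num

/-- Existence of a stable measure on candidates: via Hahn-Banach separation (minimax),
there is a probability vector `l` such that for every candidate `a`, the total "smoothed
load" `∑_v max 0 (2t - l-mass of {b ⪰_v a})` is at most `(2t² + δ)·n`. -/
lemma stmt19_stable (n m : ℕ) (pref : Fin n → Fin m → Fin m → Prop)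
    (hpref : ∀ v, IsStrictTotalOrder (Fin m) (pref v)) (hm : 0 < m) (hn : 0 < n)
    (t δ : ℝ) (ht : 0 < t) (hδ : 0 < δ) :
    ∃ l : Fin m → ℝ, (∀ b, 0 ≤ l b) ∧ (∑ b, l b) = 1 ∧
      ∀ a : Fin m,
        (∑ v : Fin n, max 0 (2*t - ∑ b ∈ univ.filter (fun b => b = a ∨ pref v b a), l b))
          ≤ (2*t^2 + δ) * n := by
  classical
  have htr : ∀ (v : Fin n) (a b c : Fin m), pref v a b → pref v b c → pref v a c := by
    intro v
    haveI := hpref v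
    exact fun a b c => IsTrans.trans a b c
  have hirr : ∀ (v : Fin n) (a : Fin m), ¬ pref v a a := by
    intro v
    haveI := hpref v
    exact fun a => Std.Irrefl.irrefl a
  have htri : ∀ (v : Fin n) (a b : Fin m), a ≠ b → pref v a b ∨ pref v b a := by
    intro v a b hab
    haveI := hpref v
    rcases (by haveI := hpref v; exact trichotomous_of (pref v) a b) with h | h | h
    · exact Or.inl h
    · exact absurd h hab
    · exact Or.inr h
  by_contra hcon
  push_neg at hcon
  set c0 : ℝ := (2*t^2 + δ) * n with hc0
  set C : Set (Fin m → ℝ) :=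
    {y | ∃ l : Fin m → ℝ, (∀ b, 0 ≤ l b) ∧ (∑ b, l b) = 1 ∧
      ∀ a : Fin m,
        (∑ v : Fin n, max 0 (2*t - ∑ b ∈ univ.filter (fun b => b = a ∨ pref v b a), l b))
          ≤ y a} with hCdef
  set D : Set (Fin m → ℝ) := Set.univ.pi (fun _ : Fin m => Set.Iio c0) with hDdef
  have hmemD : ∀ y : Fin m → ℝ, y ∈ D ↔ ∀ a, y a < c0 := by
    intro y
    constructor
    · intro h a; exact h a (Set.mem_univ a)
    · intro h a _; exact h a
  -- linearity of the mass function
  have hulin : ∀ (p q : ℝ) (l₁ l₂ : Fin m → ℝ) (v : Fin n) (a : Fin m),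
      (∑ b ∈ univ.filter (fun b => b = a ∨ pref v b a), (p * l₁ b + q * l₂ b))
        = p * (∑ b ∈ univ.filter (fun b => b = a ∨ pref v b a), l₁ b)
          + q * (∑ b ∈ univ.filter (fun b => b = a ∨ pref v b a), l₂ b) := by
    intro p q l₁ l₂ v a
    rw [Finset.sum_add_distrib, Finset.mul_sum, Finset.mul_sum]
  have hCconv : Convex ℝ C := by
    rintro y₁ ⟨l₁, hl₁0, hl₁1, hl₁⟩ y₂ ⟨l₂, hl₂0, hl₂1, hl₂⟩ p q hp hq hpq
    refine ⟨fun b => p * l₁ b + q * l₂ b,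
      fun b => add_nonneg (mul_nonneg hp (hl₁0 b)) (mul_nonneg hq (hl₂0 b)), ?_, ?_⟩
    · rw [Finset.sum_add_distrib, ← Finset.mul_sum, ← Finset.mul_sum, hl₁1, hl₂1]
      simpa using hpq
    · intro a
      have hconv : (∑ v : Fin n, max 0 (2*t -
            ∑ b ∈ univ.filter (fun b => b = a ∨ pref v b a), (p * l₁ b + q * l₂ b)))
          ≤ p * (∑ v : Fin n, max 0 (2*t - ∑ b ∈ univ.filter (fun b => b = a ∨ pref v b a), l₁ b))
            + q * (∑ v : Fin n, max 0 (2*t - ∑ b ∈ univ.filter (fun b => b = a ∨ pref v b a), l₂ b)) := by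
        rw [Finset.mul_sum, Finset.mul_sum, ← Finset.sum_add_distrib]
        apply Finset.sum_le_sum
        intro v _
        rw [hulin]
        have h1 : 2*t - (p * (∑ b ∈ univ.filter (fun b => b = a ∨ pref v b a), l₁ b)
              + q * (∑ b ∈ univ.filter (fun b => b = a ∨ pref v b a), l₂ b))
            = p * (2*t - ∑ b ∈ univ.filter (fun b => b = a ∨ pref v b a), l₁ b)
              + q * (2*t - ∑ b ∈ univ.filter (fun b => b = a ∨ pref v b a), l₂ b) := by
          linear_combination (-(2*t)) * hpq
        rw [h1]
        apply max_le
        · exact add_nonneg (mul_nonneg hp (le_max_left _ _)) (mul_nonneg hq (le_max_left _ _))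
        · exact add_le_add (mul_le_mul_of_nonneg_left (le_max_right _ _) hp)
            (mul_le_mul_of_nonneg_left (le_max_right _ _) hq)
      refine le_trans hconv ?_
      have hye : (p • y₁ + q • y₂) a = p * y₁ a + q * y₂ a := by
        simp [smul_eq_mul]
      rw [hye]
      exact add_le_add (mul_le_mul_of_nonneg_left (hl₁ a) hp)
        (mul_le_mul_of_nonneg_left (hl₂ a) hq)
  have hDconv : Convex ℝ D := convex_pi (fun a _ => convex_Iio c0)
  have hDopen : IsOpen D := isOpen_set_pi Set.finite_univ (fun a _ => isOpen_Iio)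
  have hdisj : Disjoint D C := by
    rw [Set.disjoint_left]
    rintro y hyD ⟨l, h0, h1, hFl⟩
    obtain ⟨a, ha⟩ := hcon l h0 h1
    have h2 := (hmemD y).mp hyD a
    have h3 := hFl a
    rw [hc0] at h2
    linarith
  obtain ⟨f, u, hfD, hfC⟩ := geometric_hahn_banach_open hDconv hDopen hCconv hdisj
  have hrep : ∀ y : Fin m → ℝ, f y = ∑ a, y a * f (fun j => if a = j then (1:ℝ) else 0) := by
    intro y
    conv_lhs => rw [pi_eq_sum_univ y]
    rw [map_sum]
    apply Finset.sum_congr rfl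
    intro a _
    rw [map_smul, smul_eq_mul]
  set ξ : Fin m → ℝ := fun a => f (fun j => if a = j then (1:ℝ) else 0) with hξdef
  set y₀ : Fin m → ℝ := fun _ => c0 - 1 with hy₀def
  have hy₀ : y₀ ∈ D := (hmemD _).mpr (fun a => by simp [hy₀def])
  have hξ0 : ∀ a, 0 ≤ ξ a := by
    intro a0
    by_contra hneg
    push_neg at hneg
    have hy₀u : f y₀ < u := hfD y₀ hy₀
    set M : ℝ := (u - f y₀ + 1) / (-ξ a0) with hMdef
    have hMpos : 0 < M := div_pos (by linarith) (by linarith)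
    have hyM : (y₀ - M • fun j => if a0 = j then (1:ℝ) else 0) ∈ D := by
      rw [hmemD]
      intro a
      simp only [Pi.sub_apply, Pi.smul_apply, smul_eq_mul, hy₀def]
      by_cases h : a0 = a
      · rw [if_pos h]
        linarith
      · rw [if_neg h]
        linarith
    have hfyM : f (y₀ - M • fun j => if a0 = j then (1:ℝ) else 0) = f y₀ - M * ξ a0 := by
      rw [map_sub, map_smul, smul_eq_mul]
    have hlt := hfD _ hyM
    rw [hfyM] at hlt
    have hMeq : M * (-ξ a0) = u - f y₀ + 1 := by
      rw [hMdef]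
      exact div_mul_cancel₀ _ (by linarith)
    rw [mul_neg] at hMeq
    linarith
  set s₀ : ℝ := ∑ a, ξ a with hs₀def
  have hs₀nonneg : 0 ≤ s₀ := Finset.sum_nonneg (fun a _ => hξ0 a)
  set l₀ : Fin m → ℝ := fun _ : Fin m => (1:ℝ)/m with hl₀def
  have hl₀0 : ∀ b, 0 ≤ l₀ b := fun b => by
    rw [hl₀def]
    positivity
  have hm' : (0:ℝ) < m := by exact_mod_cast hm
  have hl₀1 : ∑ b, l₀ b = 1 := by
    rw [hl₀def, Finset.sum_const, Finset.card_univ, Fintype.card_fin, nsmul_eq_mul]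
    field_simp
  have hz₀C : (fun a => ∑ v : Fin n, max 0
      (2*t - ∑ b ∈ univ.filter (fun b => b = a ∨ pref v b a), l₀ b)) ∈ C :=
    ⟨l₀, hl₀0, hl₀1, fun a => le_rfl⟩
  have hs₀pos : 0 < s₀ := by
    rcases hs₀nonneg.lt_or_eq with h | h
    · exact h
    · exfalso
      have hall := (Finset.sum_eq_zero_iff_of_nonneg (fun a (_ : a ∈ univ) => hξ0 a)).mp h.symm
      have hf0 : ∀ y : Fin m → ℝ, f y = 0 := by
        intro y
        rw [hrep]
        apply Finset.sum_eq_zero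
        intro a _
        rw [show f (fun j => if a = j then (1:ℝ) else 0) = ξ a from rfl,
          hall a (mem_univ a), mul_zero]
      have h1 : (0:ℝ) < u := by
        have := hfD y₀ hy₀
        rwa [hf0] at this
      have h2 : u ≤ 0 := by
        have := hfC _ hz₀C
        rwa [hf0] at this
      linarith
  set ξ' : Fin m → ℝ := fun a => ξ a / s₀ with hξ'def
  have hξ'0 : ∀ a, 0 ≤ ξ' a := fun a => div_nonneg (hξ0 a) hs₀pos.le
  have hξ'1 : ∑ a, ξ' a = 1 := by
    rw [hξ'def, ← Finset.sum_div, ← hs₀def, div_self hs₀pos.ne']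
  have hzC : (fun a => ∑ v : Fin n, max 0
      (2*t - ∑ b ∈ univ.filter (fun b => b = a ∨ pref v b a), ξ' b)) ∈ C :=
    ⟨ξ', hξ'0, hξ'1, fun a => le_rfl⟩
  set G : Fin m → ℝ := fun a => ∑ v : Fin n, max 0
      (2*t - ∑ b ∈ univ.filter (fun b => b = a ∨ pref v b a), ξ' b) with hGdef
  have hkey1 : u ≤ ∑ a, G a * ξ a := by
    have := hfC _ hzC
    rwa [hrep] at this
  have hkey2 : c0 * s₀ ≤ ∑ a, G a * ξ a := by
    by_contra hlt
    push_neg at hlt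
    set ε' : ℝ := (c0 * s₀ - ∑ a, G a * ξ a) / s₀ with hε'def
    have hε'pos : 0 < ε' := div_pos (by linarith) hs₀pos
    have hyε : (fun _ : Fin m => c0 - ε') ∈ D := (hmemD _).mpr (fun a => by linarith)
    have hfyε : f (fun _ : Fin m => c0 - ε') = (c0 - ε') * s₀ := by
      rw [hrep, hs₀def, Finset.mul_sum]
    have hmul : ε' * s₀ = c0 * s₀ - ∑ a, G a * ξ a := by
      rw [hε'def]
      exact div_mul_cancel₀ _ hs₀pos.ne'
    have hval : (c0 - ε') * s₀ = ∑ a, G a * ξ a := by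
      linear_combination (-1 : ℝ) * hmul
    have := hfD _ hyε
    rw [hfyε, hval] at this
    linarith
  have hdiag : ∑ a, ξ' a * G a ≤ (n : ℝ) * (2 * t^2) := by
    have hswap : ∑ a, ξ' a * G a = ∑ v : Fin n, ∑ a, ξ' a *
        max 0 (2*t - ∑ b ∈ univ.filter (fun b => b = a ∨ pref v b a), ξ' b) := by
      rw [hGdef]
      rw [Finset.sum_congr rfl (fun a (_ : a ∈ univ) => Finset.mul_sum _ _ _)]
      exact Finset.sum_comm
    rw [hswap]
    have hvb : ∀ v : Fin n, (∑ a, ξ' a *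
        max 0 (2*t - ∑ b ∈ univ.filter (fun b => b = a ∨ pref v b a), ξ' b)) ≤ 2 * t^2 := by
      intro v
      have h := stmt19_riemann (pref v) (htr v) (htri v) (hirr v) ξ' hξ'0 univ (2*t)
        (by linarith)
      calc (∑ a, ξ' a * max 0 (2*t - ∑ b ∈ univ.filter (fun b => b = a ∨ pref v b a), ξ' b))
          ≤ (2*t)^2/2 := h
        _ = 2*t^2 := by ring
    calc (∑ v : Fin n, ∑ a, ξ' a *
          max 0 (2*t - ∑ b ∈ univ.filter (fun b => b = a ∨ pref v b a), ξ' b))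
        ≤ ∑ _v : Fin n, 2*t^2 := Finset.sum_le_sum (fun v _ => hvb v)
      _ = (n:ℝ) * (2*t^2) := by
          rw [Finset.sum_const, Finset.card_univ, Fintype.card_fin, nsmul_eq_mul]
  have hfin : ∑ a, G a * ξ a = s₀ * ∑ a, ξ' a * G a := by
    rw [Finset.mul_sum]
    apply Finset.sum_congr rfl
    intro a _
    rw [hξ'def]
    field_simp
  rw [hfin] at hkey2
  have h3 : c0 * s₀ ≤ s₀ * ((n:ℝ) * (2*t^2)) :=
    le_trans hkey2 (mul_le_mul_of_nonneg_left hdiag hs₀pos.le)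
  have hn' : (0:ℝ) < n := by exact_mod_cast hn
  rw [hc0] at h3
  nlinarith [mul_pos (mul_pos hδ hn') hs₀pos, h3]

/-- The main recursive step: given a committee guarantee `α'` for size `k'`, build a
committee of size `k` achieving `(k'/k)²·α' + 4 ln(k/k')/(k-k') + ε`. -/
lemma stmt19_main (k k' : ℕ) (hk' : 1 ≤ k') (hkk : k' < k) (α' ε : ℝ)
    (hα' : hasUndom k' α') (hpos : 0 < α') (hε : 0 < ε) :
    hasUndom k (((k' : ℝ)/(k : ℝ))^2 * α'
      + 4 * Real.log ((k : ℝ)/(k' : ℝ)) / ((k : ℝ)-(k' : ℝ)) + ε) := by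
  classical
  intro n m pref hpref hn
  rcases Nat.eq_zero_or_pos m with rfl | hm
  · exact ⟨∅, by simp, fun a => a.elim0⟩
  have htr : ∀ (v : Fin n) (a b c : Fin m), pref v a b → pref v b c → pref v a c := by
    intro v
    haveI := hpref v
    exact fun a b c => IsTrans.trans a b c
  have hirr : ∀ (v : Fin n) (a : Fin m), ¬ pref v a a := by
    intro v
    haveI := hpref v
    exact fun a => Std.Irrefl.irrefl a
  have htri : ∀ (v : Fin n) (a b : Fin m), a ≠ b → pref v a b ∨ pref v b a := by
    intro v a b hab
    rcases (by haveI := hpref v; exact trichotomous_of (pref v) a b) with h | h | h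
    · exact Or.inl h
    · exact absurd h hab
    · exact Or.inr h
  have hk'0 : (0:ℝ) < k' := by exact_mod_cast hk'
  have hkR : (k':ℝ) < k := by exact_mod_cast hkk
  have hk0 : (0:ℝ) < k := lt_trans hk'0 hkR
  have hn' : (0:ℝ) < n := by exact_mod_cast hn
  set β : ℝ := ((k':ℝ)/(k:ℝ))^2 with hβdef
  have hβ0 : 0 < β := by positivity
  set t : ℝ := 2 * Real.log ((k:ℝ)/(k':ℝ)) / ((k:ℝ) - (k':ℝ)) with htdef
  have hlogpos : 0 < Real.log ((k:ℝ)/(k':ℝ)) :=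
    Real.log_pos (by rw [lt_div_iff₀ hk'0]; linarith)
  have ht : 0 < t := by
    rw [htdef]
    apply div_pos (by linarith) (by linarith)
  have hKpos : 0 < k - k' := Nat.sub_pos_of_lt hkk
  have hKcast : ((k - k' : ℕ) : ℝ) = (k:ℝ) - (k':ℝ) := by
    rw [Nat.cast_sub hkk.le]
  have hβexp : Real.exp (-(t * ((k - k' : ℕ) : ℝ))) = β := by
    rw [htdef, hKcast, div_mul_cancel₀ _ (by linarith : (k:ℝ) - (k':ℝ) ≠ 0)]
    have h2 : (2:ℝ) * Real.log ((k:ℝ)/(k':ℝ)) = Real.log (((k:ℝ)/(k':ℝ))^2) := by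
      rw [Real.log_pow]
      push_cast
      ring
    rw [h2, Real.exp_neg, Real.exp_log (pow_pos (div_pos hk0 hk'0) 2)]
    rw [hβdef, ← inv_pow, inv_div]
  have hδ : (0:ℝ) < t * ε / 2 := by positivity
  obtain ⟨l, hl0, hl1, hlmain⟩ := stmt19_stable n m pref hpref hm hn t (t*ε/2) ht hδ
  set A : Fin n → Finset (Fin m) :=
    fun v => univ.filter (fun b => (∑ c ∈ univ.filter (fun c => pref v c b), l c) < t) with hAdef
  have hmassA : ∀ v, t ≤ 1 → t ≤ ∑ b ∈ A v, l b := by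
    intro v ht1
    by_cases hall : ∀ b, (∑ c ∈ univ.filter (fun c => pref v c b), l c) < t
    · have hAv : A v = univ := by
        simp only [hAdef]
        apply Finset.filter_true_of_mem
        intro b _
        exact hall b
      rw [hAv, hl1]
      exact ht1
    · push_neg at hall
      obtain ⟨b₁, hb₁⟩ := hall
      set Bc : Finset (Fin m) :=
        univ.filter (fun b => t ≤ ∑ c ∈ univ.filter (fun c => pref v c b), l c) with hBcdef
      have hBcne : Bc.Nonempty := ⟨b₁, by
        simp only [hBcdef, Finset.mem_filter]
        exact ⟨mem_univ _, hb₁⟩⟩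
      obtain ⟨b₀, hb₀Bc, hb₀top⟩ := stmt19_exists_top (pref v) (htr v) (htri v) Bc hBcne
      have hb₀ : t ≤ ∑ c ∈ univ.filter (fun c => pref v c b₀), l c := by
        simp only [hBcdef, Finset.mem_filter] at hb₀Bc
        exact hb₀Bc.2
      refine le_trans hb₀ ?_
      apply Finset.sum_le_sum_of_subset_of_nonneg
      · intro c hc
        have hcb₀ : pref v c b₀ := (Finset.mem_filter.mp hc).2
        simp only [hAdef, Finset.mem_filter]
        refine ⟨mem_univ _, ?_⟩
        by_contra hge
        push_neg at hge
        have hcBc : c ∈ Bc := by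
          simp only [hBcdef, Finset.mem_filter]
          exact ⟨mem_univ _, hge⟩
        have hcne : c ≠ b₀ := by
          intro h
          rw [h] at hcb₀
          exact hirr v b₀ hcb₀
        exact hirr v c (htr v c b₀ c hcb₀ (hb₀top c hcBc hcne))
      · intro c _ _
        exact hl0 c
  have hApow : ∀ v : Fin n, (1 - ∑ b ∈ A v, l b)^(k - k') ≤ β := by
    intro v
    have hmle : ∑ b ∈ A v, l b ≤ 1 := by
      rw [← hl1]
      apply Finset.sum_le_sum_of_subset_of_nonneg (Finset.subset_univ _)
      intro c _ _
      exact hl0 c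
    rcases le_or_gt t 1 with ht1 | ht1
    · have h1 := hmassA v ht1
      have h2 : (1 - ∑ b ∈ A v, l b)^(k-k') ≤ (1 - t)^(k-k') :=
        pow_le_pow_left₀ (by linarith) (by linarith) _
      have h3 : (1 - t)^(k-k') ≤ (Real.exp (-t))^(k-k') :=
        pow_le_pow_left₀ (by linarith) (by linarith [Real.add_one_le_exp (-t)]) _
      have h4 : (Real.exp (-t))^(k-k') = Real.exp (-(t * ((k-k' : ℕ) : ℝ))) := by
        rw [← Real.exp_nat_mul]
        congr 1
        ring
      calc (1 - ∑ b ∈ A v, l b)^(k-k') ≤ (1-t)^(k-k') := h2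
        _ ≤ (Real.exp (-t))^(k-k') := h3
        _ = Real.exp (-(t * ((k-k':ℕ) : ℝ))) := h4
        _ = β := hβexp
    · have hAv : A v = univ := by
        simp only [hAdef]
        apply Finset.filter_true_of_mem
        intro b _
        have hble : ∑ c ∈ univ.filter (fun c => pref v c b), l c ≤ 1 := by
          rw [← hl1]
          apply Finset.sum_le_sum_of_subset_of_nonneg (Finset.subset_univ _)
          intro c _ _
          exact hl0 c
        linarith
      rw [hAv, hl1, sub_self, zero_pow hKpos.ne']
      exact hβ0.le
  obtain ⟨T, hTcard, hTle⟩ := stmt19_sample l hl0 hl1 A (k - k') univ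
  set R : Finset (Fin n) := univ.filter (fun v => ∀ b ∈ T, b ∉ A v) with hRdef
  have hRcard : (R.card : ℝ) ≤ β * n := by
    refine le_trans hTle ?_
    calc (∑ v ∈ univ, (1 - ∑ b ∈ A v, l b)^(k-k')) ≤ ∑ _v ∈ univ, β :=
        Finset.sum_le_sum (fun v _ => hApow v)
      _ = β * n := by
          rw [Finset.sum_const, Finset.card_univ, Fintype.card_fin, nsmul_eq_mul, mul_comm]
  have hS'ex : ∃ S' : Finset (Fin m), S'.card ≤ k' ∧
      ∀ a, ((R.filter fun v => ∀ b ∈ S', pref v a b).card : ℝ) ≤ α' * R.card := by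
    rcases Nat.eq_zero_or_pos R.card with h0 | hRpos
    · refine ⟨∅, by simp, fun a => ?_⟩
      have hRempty : R = ∅ := Finset.card_eq_zero.mp h0
      rw [hRempty]
      simp
    · set ι : Fin R.card → Fin n := fun w => ((R.orderIsoOfFin rfl) w : Fin n) with hιdef
      have hιmem : ∀ w, ι w ∈ R := fun w => ((R.orderIsoOfFin rfl) w).2
      have hιinj : Function.Injective ι := fun w₁ w₂ h =>
        (R.orderIsoOfFin rfl).injective (Subtype.ext h)
      obtain ⟨S', hS'card, hS'⟩ := hα' R.card m (fun w => pref (ι w)) (fun w => hpref (ι w)) hRpos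
      refine ⟨S', hS'card, fun a => ?_⟩
      have hcardeq : (R.filter fun v => ∀ b ∈ S', pref v a b).card
          = (univ.filter fun w : Fin R.card => ∀ b ∈ S', pref (ι w) a b).card := by
        symm
        apply Finset.card_bij (fun w _ => ι w)
        · intro w hw
          rw [Finset.mem_filter]
          exact ⟨hιmem w, (Finset.mem_filter.mp hw).2⟩
        · intro w₁ _ w₂ _ h
          exact hιinj h
        · intro v hv
          obtain ⟨hvR, hvP⟩ := Finset.mem_filter.mp hv
          refine ⟨(R.orderIsoOfFin rfl).symm ⟨v, hvR⟩, ?_, ?_⟩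
          · rw [Finset.mem_filter]
            refine ⟨mem_univ _, ?_⟩
            have hvi : ι ((R.orderIsoOfFin rfl).symm ⟨v, hvR⟩) = v := by
              simp only [hιdef, OrderIso.apply_symm_apply]
            rw [hvi]
            exact hvP
          · simp only [hιdef, OrderIso.apply_symm_apply]
      have hlt := hS' a
      rw [div_lt_iff₀ (by exact_mod_cast hRpos : (0:ℝ) < (R.card : ℝ))] at hlt
      rw [hcardeq]
      exact le_of_lt hlt
  obtain ⟨S', hS'card, hS'main⟩ := hS'ex
  refine ⟨T.toFinset ∪ S', ?_, ?_⟩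
  · calc (T.toFinset ∪ S').card ≤ T.toFinset.card + S'.card := Finset.card_union_le _ _
      _ ≤ (k - k') + k' := add_le_add (le_trans (Multiset.toFinset_card_le T) hTcard.le) hS'card
      _ = k := Nat.sub_add_cancel hkk.le
  · intro a
    have hsplit := Finset.card_filter_add_card_filter_not
      (s := univ.filter (fun v : Fin n => ∀ b ∈ T.toFinset ∪ S', pref v a b))
      (p := fun v => v ∈ R)
    set killer := univ.filter (fun v : Fin n => ∀ b ∈ T.toFinset ∪ S', pref v a b) with hkdef
    have h1 : ((killer.filter (fun v => v ∈ R)).card : ℝ) ≤ α' * (β * n) := by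
      have hsub : killer.filter (fun v => v ∈ R) ⊆ R.filter (fun v => ∀ b ∈ S', pref v a b) := by
        intro v hv
        obtain ⟨hvk, hvR⟩ := Finset.mem_filter.mp hv
        obtain ⟨-, hvP⟩ := Finset.mem_filter.mp hvk
        rw [Finset.mem_filter]
        exact ⟨hvR, fun b hb => hvP b (Finset.mem_union_right _ hb)⟩
      calc ((killer.filter (fun v => v ∈ R)).card : ℝ)
          ≤ ((R.filter (fun v => ∀ b ∈ S', pref v a b)).card : ℝ) := by
            exact_mod_cast Finset.card_le_card hsub
        _ ≤ α' * R.card := hS'main a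
        _ ≤ α' * (β * n) := mul_le_mul_of_nonneg_left hRcard hpos.le
    have h2 : ((killer.filter (fun v => v ∉ R)).card : ℝ) ≤ (2*t + ε/2) * n := by
      have hptw : ∀ v ∈ killer.filter (fun v => v ∉ R),
          t ≤ max 0 (2*t - ∑ b ∈ univ.filter (fun b => b = a ∨ pref v b a), l b) := by
        intro v hv
        obtain ⟨hvk, hvnR⟩ := Finset.mem_filter.mp hv
        obtain ⟨-, hvP⟩ := Finset.mem_filter.mp hvk
        have hvnR' : ¬ (∀ b ∈ T, b ∉ A v) := by
          intro hcontra
          apply hvnR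
          simp only [hRdef, Finset.mem_filter]
          exact ⟨mem_univ _, hcontra⟩
        push_neg at hvnR'
        obtain ⟨b₀, hb₀T, hb₀A⟩ := hvnR'
        have hb₀A' : (∑ c ∈ univ.filter (fun c => pref v c b₀), l c) < t := by
          simp only [hAdef, Finset.mem_filter] at hb₀A
          exact hb₀A.2
        have hab₀ : pref v a b₀ :=
          hvP b₀ (Finset.mem_union_left _ (Multiset.mem_toFinset.mpr hb₀T))
        have humass : (∑ b ∈ univ.filter (fun b => b = a ∨ pref v b a), l b)
            ≤ ∑ c ∈ univ.filter (fun c => pref v c b₀), l c := by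
          apply Finset.sum_le_sum_of_subset_of_nonneg
          · intro c hc
            rw [Finset.mem_filter] at hc ⊢
            refine ⟨mem_univ _, ?_⟩
            rcases hc.2 with rfl | hca
            · exact hab₀
            · exact htr v c a b₀ hca hab₀
          · intro c _ _
            exact hl0 c
        have hstep : t ≤ 2*t - (∑ b ∈ univ.filter (fun b => b = a ∨ pref v b a), l b) := by
          linarith
        exact le_trans hstep (le_max_right _ _)
      have hsum1 : t * ((killer.filter (fun v => v ∉ R)).card : ℝ)
          ≤ ∑ v ∈ killer.filter (fun v => v ∉ R),
              max 0 (2*t - ∑ b ∈ univ.filter (fun b => b = a ∨ pref v b a), l b) := by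
        calc t * ((killer.filter (fun v => v ∉ R)).card : ℝ)
            = ∑ _v ∈ killer.filter (fun v => v ∉ R), t := by
              rw [Finset.sum_const, nsmul_eq_mul, mul_comm]
          _ ≤ _ := Finset.sum_le_sum hptw
      have hsum2 : (∑ v ∈ killer.filter (fun v => v ∉ R),
            max 0 (2*t - ∑ b ∈ univ.filter (fun b => b = a ∨ pref v b a), l b))
          ≤ ∑ v : Fin n, max 0 (2*t - ∑ b ∈ univ.filter (fun b => b = a ∨ pref v b a), l b) := by
        apply Finset.sum_le_sum_of_subset_of_nonneg (Finset.subset_univ _)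
        intro v _ _
        exact le_max_left _ _
      have h3 := hlmain a
      have h4 : t * ((killer.filter (fun v => v ∉ R)).card : ℝ) ≤ t * ((2*t + ε/2) * n) := by
        have heq : (2*t^2 + t*ε/2) * n = t * ((2*t + ε/2)*n) := by ring
        calc t * ((killer.filter (fun v => v ∉ R)).card : ℝ)
            ≤ (2*t^2 + t*ε/2)*n := le_trans hsum1 (le_trans hsum2 h3)
          _ = t * ((2*t+ε/2)*n) := heq
      exact le_of_mul_le_mul_left h4 ht
    have hcard : (killer.card : ℝ) < (β * α' + 2*t + ε) * n := by
      have hsplit' : (killer.card : ℝ) = ((killer.filter (fun v => v ∈ R)).card : ℝ)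
          + ((killer.filter (fun v => v ∉ R)).card : ℝ) := by
        exact_mod_cast hsplit.symm
      rw [hsplit']
      have hgoal : (β*α' + 2*t + ε)*n = α'*(β*n) + (2*t + ε/2)*n + (ε/2)*n := by ring
      rw [hgoal]
      have h5 : 0 < ε/2*n := by positivity
      linarith [h1, h2]
    rw [div_lt_iff₀ hn']
    have hform : β * α' + 2*t + ε
        = β * α' + 4 * Real.log ((k:ℝ)/(k':ℝ)) / ((k:ℝ)-(k':ℝ)) + ε := by
      rw [htdef]
      ring
    rw [← hform]
    exact hcard

/-- Let `α(k)` be the infimum over all `α` such that every election admits an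
`α`-undominated committee of size `k`. Then for all integers `1 ≤ k' < k`,
`α(k) ≤ (k'/k)²·α(k') + 4·ln(k/k')/(k - k')`. -/
theorem stmt19 (k k' : ℕ) (hk' : 1 ≤ k') (hkk : k' < k) :
    sInf {α : ℝ | hasUndom k α} ≤
      ((k' : ℝ) / (k : ℝ)) ^ 2 * sInf {α : ℝ | hasUndom k' α}
        + 4 * Real.log ((k : ℝ) / (k' : ℝ)) / ((k : ℝ) - (k' : ℝ)) := by
  classical
  have hne' : {α : ℝ | hasUndom k' α}.Nonempty := ⟨2, stmt19_two k'⟩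
  have hbdd : BddBelow {α : ℝ | hasUndom k α} := ⟨0, fun α hα => (stmt19_pos hα).le⟩
  have hk'0 : (0:ℝ) < k' := by exact_mod_cast hk'
  have hkR : (k':ℝ) < k := by exact_mod_cast hkk
  have hk0 : (0:ℝ) < k := lt_trans hk'0 hkR
  set β : ℝ := ((k':ℝ)/(k:ℝ))^2 with hβdef
  have hβ0 : 0 < β := by positivity
  set c2 : ℝ := 4 * Real.log ((k:ℝ)/(k':ℝ)) / ((k:ℝ)-(k':ℝ)) with hc2def
  have key : ∀ α' ∈ {α : ℝ | hasUndom k' α}, sInf {α : ℝ | hasUndom k α} ≤ β * α' + c2 := by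
    intro α' hα'
    have hαpos : 0 < α' := stmt19_pos hα'
    apply le_of_forall_pos_le_add
    intro ε hε
    have hmem : hasUndom k (β * α' + c2 + ε) := by
      have h := stmt19_main k k' hk' hkk α' ε hα' hαpos hε
      rw [hβdef, hc2def]
      exact h
    exact csInf_le hbdd hmem
  have h2 : (sInf {α : ℝ | hasUndom k α} - c2) / β ≤ sInf {α : ℝ | hasUndom k' α} := by
    apply le_csInf hne'
    intro α' hα'
    rw [div_le_iff₀ hβ0]
    have hkey := key α' hα'
    have hcomm : β * α' = α' * β := mul_comm _ _
    linarith
  rw [div_le_iff₀ hβ0] at h2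
  have hcomm : sInf {α : ℝ | hasUndom k' α} * β = β * sInf {α : ℝ | hasUndom k' α} :=
    mul_comm _ _
  linarith
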